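/- If Γ is a torsion-free discrete group of isometries acting freely on the Heisenberg group H_n such that a minimal connected Γ-invariant Lie subgroup V on which Γ acts is cocompact, and Γ is either abelian or 2-step nilpotent, then Γ acts on V by left translations. -/

import Mathlib

/-! Setup: the Heisenberg group `H_n = ℂ^{n-1} × ℝ` (here `m = n-1`), its unitary
rotations `U(n-1)`, the isometry group `H(n) = H_n ⋊ U(n-1)` of the Cygan metric, its
natural affine action on `H_n`, and the natural topologies. -/

/-- The Heisenberg group `H_n = ℂ^{n-1} × ℝ` as a type (here `m = n-1`). -/
structure Heis (m : ℕ) where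
  ξ : EuclideanSpace ℂ (Fin m)
  v : ℝ

/-- The Heisenberg group law `(ξ₁,v₁)·(ξ₂,v₂) = (ξ₁+ξ₂, v₁+v₂+2 Im⟨ξ₁,ξ₂⟩)`, with
`⟨ξ₁,ξ₂⟩ = Σ ξ₁ᵢ conj(ξ₂ᵢ) = inner ξ₂ ξ₁` in Mathlib's convention. -/
noncomputable instance instGroupHeis (m : ℕ) : Group (Heis m) where
  mul p q := ⟨p.ξ + q.ξ, p.v + q.v + 2 * (inner ℂ q.ξ p.ξ : ℂ).im⟩
  one := ⟨0, 0⟩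
  inv p := ⟨-p.ξ, -p.v⟩
  mul_assoc := by
    rintro ⟨a, x⟩ ⟨b, y⟩ ⟨c, z⟩
    show Heis.mk ((a + b) + c)
        ((x + y + 2 * (inner ℂ b a : ℂ).im) + z + 2 * (inner ℂ c (a + b) : ℂ).im) =
      Heis.mk (a + (b + c))
        (x + (y + z + 2 * (inner ℂ c b : ℂ).im) + 2 * (inner ℂ (b + c) a : ℂ).im)
    simp only [Heis.mk.injEq, inner_add_left, inner_add_right, Complex.add_im]
    exact ⟨add_assoc a b c, by ring⟩
  one_mul := by
    rintro ⟨a, x⟩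
    show Heis.mk (0 + a) (0 + x + 2 * (inner ℂ a (0 : EuclideanSpace ℂ (Fin m)) : ℂ).im) =
      Heis.mk a x
    simp
  mul_one := by
    rintro ⟨a, x⟩
    show Heis.mk (a + 0) (x + 0 + 2 * (inner ℂ (0 : EuclideanSpace ℂ (Fin m)) a : ℂ).im) =
      Heis.mk a x
    simp
  inv_mul_cancel := by
    rintro ⟨a, x⟩
    show Heis.mk (-a + a) (-x + x + 2 * (inner ℂ a (-a) : ℂ).im) = Heis.mk 0 0
    simp [inner_neg_right, inner_self_im]
    rw [← Complex.ofReal_pow]; exact Complex.ofReal_im _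

noncomputable instance (m : ℕ) : TopologicalSpace (Heis m) :=
  TopologicalSpace.induced (fun p => (p.ξ, p.v)) inferInstance

/-- The unitary group `U(n-1)`, as ℂ-linear isometries of `ℂ^{n-1}`. -/
abbrev UnitaryGp (m : ℕ) :=
  EuclideanSpace ℂ (Fin m) ≃ₗᵢ[ℂ] EuclideanSpace ℂ (Fin m)

/-- A unitary rotation `A` acts on `H_n` by the automorphism `(ξ,v) ↦ (Aξ, v)`. -/
noncomputable def rotAut (m : ℕ) (A : UnitaryGp m) : MulAut (Heis m) where
  toFun p := ⟨A p.ξ, p.v⟩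
  invFun p := ⟨A.symm p.ξ, p.v⟩
  left_inv := by intro p; simp
  right_inv := by intro p; simp
  map_mul' := by
    rintro ⟨a, x⟩ ⟨b, y⟩
    show Heis.mk (A (a + b)) (x + y + 2 * (inner ℂ b a : ℂ).im) =
      Heis.mk (A a + A b) (x + y + 2 * (inner ℂ (A b) (A a) : ℂ).im)
    simp [LinearIsometryEquiv.inner_map_map]

/-- The rotation action as a homomorphism `U(n-1) →* Aut(H_n)`. -/
noncomputable def rotHom (m : ℕ) : UnitaryGp m →* MulAut (Heis m) where
  toFun := rotAut m
  map_one' := by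
    ext p
    show Heis.mk ((1 : UnitaryGp m) p.ξ) p.v = p
    cases p; rfl
  map_mul' := by
    intro A B
    ext p
    rfl

/-- The isometry group `H(n) = H_n ⋊ U(n-1)` of the Heisenberg group. -/
abbrev HeisIsomGp (m : ℕ) := Heis m ⋊[rotHom m] UnitaryGp m

noncomputable instance (m : ℕ) : TopologicalSpace (HeisIsomGp m) :=
  TopologicalSpace.induced
    (fun g => (g.left.ξ, g.left.v, fun x : EuclideanSpace ℂ (Fin m) => g.right x))
    inferInstance

/-- The natural affine action of `H_n ⋊ U(n-1)` on `H_n`: `(b,A)·x = b·(A·x)`. -/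
noncomputable def affAct {m : ℕ} (g : HeisIsomGp m) (x : Heis m) : Heis m :=
  g.left * rotHom m g.right x

open scoped commutatorElement

section AuxLemmas

/-- If `n * ‖u‖` is bounded over all `n : ℕ`, then `u = 0`. -/
private theorem aux_small {E : Type*} [NormedAddCommGroup E] (u : E) (C : ℝ)
    (h : ∀ n : ℕ, (n : ℝ) * ‖u‖ ≤ C) : u = 0 := by
  by_contra hu
  have hnorm : 0 < ‖u‖ := norm_pos_iff.mpr hu
  obtain ⟨n, hn⟩ := exists_nat_gt (C / ‖u‖)
  have h1 := h n
  have h2 : (n : ℝ) ≤ C / ‖u‖ := (le_div_iff₀ hnorm).mpr h1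
  linarith

/-- Abstract key lemma: let `G` be a group, `A : G →* Isom(E)` a homomorphism into linear
isometries of a finite-dimensional complex inner product space, and `β : G → E` a cocycle
(`β (g*h) = β g + A g (β h)`).  Suppose `P ⊆ E` is closed under addition, contains all `β g`,
and every point of `P` is within distance `R` of some `β g`.  If `G` is abelian or 2-step
nilpotent, then every `A g` fixes `P` pointwise. -/
private theorem aux_key {E : Type*} [NormedAddCommGroup E] [InnerProductSpace ℂ E]
    [FiniteDimensional ℂ E] {G : Type*} [Group G]
    (A : G →* (E ≃ₗᵢ[ℂ] E)) (β : G → E)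
    (hβ : ∀ g h : G, β (g * h) = β g + A g (β h))
    (P : Set E)
    (hPadd : ∀ w ∈ P, ∀ w' ∈ P, w + w' ∈ P)
    (hβP : ∀ g : G, β g ∈ P)
    (R : ℝ)
    (hdense : ∀ w ∈ P, ∃ g : G, ‖w - β g‖ ≤ R)
    (hstep : (∀ a b : G, a * b = b * a) ∨ (∀ a b c : G, ⁅⁅a, b⁆, c⁆ = 1)) :
    ∀ g : G, ∀ w ∈ P, A g w = w := by
  -- basic facts
  have hβ1 : β (1 : G) = 0 := by
    have h := hβ 1 1
    simp only [one_mul, map_one, LinearIsometryEquiv.coe_one, id_eq] at h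
    exact left_eq_add.mp h
  have hP0 : (0 : E) ∈ P := hβ1 ▸ hβP 1
  have hPn : ∀ w ∈ P, ∀ n : ℕ, (n : ℂ) • w ∈ P := by
    intro w hw n
    induction n with
    | zero => simpa using hP0
    | succ k ih =>
      have : ((k + 1 : ℕ) : ℂ) • w = (k : ℂ) • w + w := by
        push_cast
        rw [add_smul, one_smul]
      rw [this]
      exact hPadd _ ih _ hw
  have hR0 : 0 ≤ R := le_trans (norm_nonneg _) ((hdense 0 hP0).choose_spec)
  -- relation for commuting elements
  have hcomm_rel : ∀ c k : G, c * k = k * c →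
      A c (β k) - β k = A k (β c) - β c := by
    intro c k h
    have h1 : β c + A c (β k) = β k + A k (β c) := by
      have e1 := hβ c k
      have e2 := hβ k c
      rw [h, e2] at e1
      linear_combination (norm := abel) - e1
    calc A c (β k) - β k = (β c + A c (β k)) - (β c + β k) := by abel
      _ = (β k + A k (β c)) - (β c + β k) := by rw [h1]
      _ = A k (β c) - β c := by abel
  -- the bound `‖A g (β h) - β h‖ ≤ 2 ‖β c‖` for commuting pairs
  have hcomm_bd : ∀ c k : G, c * k = k * c → ‖A c (β k) - β k‖ ≤ 2 * ‖β c‖ := by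
    intro c k h
    rw [hcomm_rel c k h]
    have h1 := norm_sub_le (A k (β c)) (β c)
    rw [(A k).norm_map] at h1
    linarith
  -- main linear-algebra step
  have L1 : ∀ (P₀ : Submodule ℂ E) (g : G) (M : ℝ),
      (∀ h : G, ∃ z ∈ P₀, ‖A g (β h) - β h - z‖ ≤ M) →
      ∀ w ∈ P, A g w - w ∈ P₀ := by
    intro P₀ g M hbd w hw
    haveI : CompleteSpace P₀ := FiniteDimensional.complete ℂ P₀
    set q : E →L[ℂ] ↥(P₀ᗮ) := Submodule.orthogonalProjectionOnto P₀ᗮ with hqdef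
    have hq0 : ∀ z ∈ P₀, q z = 0 := fun z hz =>
      Submodule.orthogonalProjectionOnto_apply_of_mem_orthogonal
        (P₀.le_orthogonal_orthogonal hz)
    have hqn : ∀ y : E, ‖q y‖ ≤ ‖y‖ := by
      intro y
      calc ‖q y‖ ≤ ‖q‖ * ‖y‖ := q.le_opNorm y
        _ ≤ 1 * ‖y‖ := by
          rw [hqdef]
          exact mul_le_mul_of_nonneg_right (Submodule.orthogonalProjectionOnto_norm_le (K := P₀ᗮ))
            (norm_nonneg y)
        _ = ‖y‖ := one_mul _
    have hM0 : 0 ≤ M := by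
      obtain ⟨z, _, hz⟩ := hbd 1
      exact le_trans (norm_nonneg _) hz
    have key0 : q (A g w - w) = 0 := by
      apply aux_small _ (M + 2 * R)
      intro n
      obtain ⟨h, hh⟩ := hdense ((n : ℂ) • w) (hPn w hw n)
      obtain ⟨z, hz, hzb⟩ := hbd h
      have e1 : A g ((n : ℂ) • w) - (n : ℂ) • w
          = (A g ((n : ℂ) • w - β h) - ((n : ℂ) • w - β h)) + (A g (β h) - β h) := by
        rw [map_sub]
        abel
      have e2 : q (A g ((n : ℂ) • w) - (n : ℂ) • w) = (n : ℂ) • q (A g w - w) := by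
        rw [map_smul, ← smul_sub, map_smul]
      have e3 : ‖q (A g (β h) - β h)‖ ≤ M := by
        have heq : q (A g (β h) - β h - z) = q (A g (β h) - β h) := by
          rw [map_sub q (A g (β h) - β h) z, hq0 z hz, sub_zero]
        rw [← heq]
        exact le_trans (hqn _) hzb
      have e4 : ‖q (A g ((n : ℂ) • w - β h) - ((n : ℂ) • w - β h))‖ ≤ 2 * R := by
        refine le_trans (hqn _) ?_
        have h1 := norm_sub_le (A g ((n : ℂ) • w - β h)) ((n : ℂ) • w - β h)
        rw [(A g).norm_map] at h1
        linarith
      calc (n : ℝ) * ‖q (A g w - w)‖ = ‖(n : ℂ) • q (A g w - w)‖ := by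
            rw [norm_smul, Complex.norm_natCast]
        _ = ‖q (A g ((n : ℂ) • w) - (n : ℂ) • w)‖ := by rw [e2]
        _ = ‖q (A g ((n : ℂ) • w - β h) - ((n : ℂ) • w - β h))
              + q (A g (β h) - β h)‖ := by rw [← map_add, ← e1]
        _ ≤ 2 * R + M := le_trans (norm_add_le _ _) (by linarith)
        _ ≤ M + 2 * R := by linarith
    have hmem : A g w - w - q (A g w - w) ∈ (P₀ᗮ)ᗮ :=
      Submodule.sub_starProjection_mem_orthogonal (K := P₀ᗮ) _
    rw [key0] at hmem
    simp only [Submodule.coe_zero, sub_zero] at hmem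
    rwa [Submodule.orthogonal_orthogonal] at hmem
  rcases hstep with habel | h2step
  · -- abelian case
    intro g w hw
    have hbd : ∀ h : G, ∃ z ∈ (⊥ : Submodule ℂ E),
        ‖A g (β h) - β h - z‖ ≤ 2 * ‖β g‖ := by
      intro h
      exact ⟨0, Submodule.zero_mem _, by rw [sub_zero]; exact hcomm_bd g h (habel g h)⟩
    have := L1 ⊥ g (2 * ‖β g‖) hbd w hw
    rw [Submodule.mem_bot, sub_eq_zero] at this
    exact this
  · -- 2-step nilpotent case
    have hcomm_c : ∀ a b k : G, ⁅a, b⁆ * k = k * ⁅a, b⁆ := fun a b k =>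
      commutatorElement_eq_one_iff_mul_comm.mp (h2step a b k)
    have stepA : ∀ a b : G, ∀ w ∈ P, A ⁅a, b⁆ w = w := by
      intro a b w hw
      have hbd : ∀ k : G, ∃ z ∈ (⊥ : Submodule ℂ E),
          ‖A ⁅a, b⁆ (β k) - β k - z‖ ≤ 2 * ‖β ⁅a, b⁆‖ := by
        intro k
        exact ⟨0, Submodule.zero_mem _,
          by rw [sub_zero]; exact hcomm_bd ⁅a, b⁆ k (hcomm_c a b k)⟩
      have := L1 ⊥ ⁅a, b⁆ (2 * ‖β ⁅a, b⁆‖) hbd w hw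
      rw [Submodule.mem_bot, sub_eq_zero] at this
      exact this
    -- the common fixed submodule
    let P₀f : Submodule ℂ E :=
      { carrier := {x | ∀ k : G, A k x = x}
        add_mem' := by
          intro x y hx hy k
          rw [map_add, hx k, hy k]
        zero_mem' := by
          intro k
          rw [map_zero]
        smul_mem' := by
          intro c x hx k
          rw [map_smul, hx k] }
    have stepB : ∀ a b : G, β ⁅a, b⁆ ∈ P₀f := by
      intro a b k
      have h := hcomm_rel ⁅a, b⁆ k (hcomm_c a b k)
      rw [stepA a b (β k) (hβP k), sub_self] at h
      have h2 : A k (β ⁅a, b⁆) - β ⁅a, b⁆ = 0 := h.symm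
      rw [sub_eq_zero] at h2
      exact h2
    intro g w hw
    have hbd : ∀ h : G, ∃ z ∈ P₀f, ‖A g (β h) - β h - z‖ ≤ 2 * ‖β g‖ := by
      intro h
      refine ⟨β ⁅g, h⁆, stepB g h, ?_⟩
      have hid : g * h = ⁅g, h⁆ * (h * g) := by group
      have e2 : β (⁅g, h⁆ * (h * g)) = β ⁅g, h⁆ + (β h + A (⁅g, h⁆ * h) (β g)) := by
        rw [hβ ⁅g, h⁆ (h * g), hβ h g, map_add, stepA g h (β h) (hβP h),
          map_mul, LinearIsometryEquiv.coe_mul, Function.comp_apply]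
      have e3 : β g + A g (β h) = β ⁅g, h⁆ + (β h + A (⁅g, h⁆ * h) (β g)) := by
        rw [← hβ g h, hid, e2]
      have e4 : A g (β h) - β h - β ⁅g, h⁆ = A (⁅g, h⁆ * h) (β g) - β g := by
        calc A g (β h) - β h - β ⁅g, h⁆
            = (β g + A g (β h)) - (β g + β h + β ⁅g, h⁆) := by abel
          _ = (β ⁅g, h⁆ + (β h + A (⁅g, h⁆ * h) (β g))) - (β g + β h + β ⁅g, h⁆) := by
              rw [e3]
          _ = A (⁅g, h⁆ * h) (β g) - β g := by abel
      rw [e4]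
      have h1 := norm_sub_le (A (⁅g, h⁆ * h) (β g)) (β g)
      rw [(A _).norm_map] at h1
      linarith
    have hu := L1 P₀f g (2 * ‖β g‖) hbd w hw
    have hfix : ∀ k : G, A k (A g w - w) = A g w - w := hu
    have hAgw : A g w = w + (A g w - w) := by abel
    have pow : ∀ nn : ℕ, A (g ^ nn) w = w + (nn : ℂ) • (A g w - w) := by
      intro nn
      induction nn with
      | zero => simp
      | succ k ih =>
        have hgp : g ^ (k + 1) = g * g ^ k := by rw [pow_succ']
        rw [hgp, map_mul, LinearIsometryEquiv.coe_mul, Function.comp_apply, ih,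
          map_add, map_smul, hfix g]
        have hcast : ((k + 1 : ℕ) : ℂ) • (A g w - w)
            = (k : ℂ) • (A g w - w) + (A g w - w) := by
          push_cast
          rw [add_smul, one_smul]
        rw [hcast]
        abel
    have hzero : A g w - w = 0 := by
      apply aux_small _ (2 * ‖w‖)
      intro nn
      have h1 : ‖w + (nn : ℂ) • (A g w - w)‖ = ‖w‖ := by
        rw [← pow nn, (A _).norm_map]
      have h2 : ‖(nn : ℂ) • (A g w - w)‖ ≤ ‖w + (nn : ℂ) • (A g w - w)‖ + ‖w‖ := by
        have h3 := norm_sub_le (w + (nn : ℂ) • (A g w - w)) w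
        have h4 : w + (nn : ℂ) • (A g w - w) - w = (nn : ℂ) • (A g w - w) := by abel
        rw [h4] at h3
        exact h3
      rw [h1] at h2
      calc (nn : ℝ) * ‖A g w - w‖ = ‖(nn : ℂ) • (A g w - w)‖ := by
            rw [norm_smul, Complex.norm_natCast]
        _ ≤ 2 * ‖w‖ := by linarith
    rw [sub_eq_zero] at hzero
    exact hzero

end AuxLemmas

/-- let `Γ` be a torsion-free discrete subgroup of
`H(n) = H_n ⋊ U(n-1)` acting freely on the Heisenberg group `H_n`, let `V` be a
minimal connected (closed) `Γ`-invariant Lie subgroup of `H_n` on which `Γ` acts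
cocompactly, and suppose `Γ` is abelian or 2-step nilpotent. Then `Γ` acts on `V`
by left translations. -/
theorem gamma_acts_by_left_translations (n : ℕ) (hn : 2 ≤ n)
    (Γ : Subgroup (HeisIsomGp (n-1)))
    (hdiscrete : DiscreteTopology Γ)
    (htorsionfree : ∀ γ ∈ Γ, IsOfFinOrder γ → γ = 1)
    (hfree : ∀ γ ∈ Γ, ∀ x : Heis (n-1), affAct γ x = x → γ = 1)
    (V : Subgroup (Heis (n-1)))
    (hVconn : IsConnected (V : Set (Heis (n-1))))
    (hVclosed : IsClosed (V : Set (Heis (n-1))))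
    (hVinv : ∀ γ ∈ Γ, ∀ x ∈ V, affAct γ x ∈ V)
    (hVmin : ∀ W : Subgroup (Heis (n-1)), IsConnected (W : Set (Heis (n-1))) →
      IsClosed (W : Set (Heis (n-1))) → (∀ γ ∈ Γ, ∀ x ∈ W, affAct γ x ∈ W) →
      W ≤ V → W = V)
    (hcocompact : ∃ K : Set (Heis (n-1)), IsCompact K ∧ K ⊆ (V : Set (Heis (n-1))) ∧
      (V : Set (Heis (n-1))) ⊆ ⋃ γ ∈ Γ, affAct γ '' K)
    (hnilp : (∀ a ∈ Γ, ∀ b ∈ Γ, a * b = b * a) ∨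
      (∀ a ∈ Γ, ∀ b ∈ Γ, ∀ c ∈ Γ, ⁅⁅a, b⁆, c⁆ = 1)) :
    ∀ γ ∈ Γ, ∃ b : Heis (n-1), ∀ x ∈ V, affAct γ x = b * x := by
  classical
  obtain ⟨K, hKcomp, hKV, hcover⟩ := hcocompact
  -- the group, rotation parts and translation parts
  let A : ↥Γ →* UnitaryGp (n-1) := SemidirectProduct.rightHom.comp Γ.subtype
  let β : ↥Γ → EuclideanSpace ℂ (Fin (n-1)) := fun g => ((g : HeisIsomGp (n-1)).left).ξ
  let P : Set (EuclideanSpace ℂ (Fin (n-1))) := {w | ∃ x ∈ V, Heis.ξ x = w}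
  have hβ : ∀ g h : ↥Γ, β (g * h) = β g + A g (β h) := fun g h => rfl
  have hPadd : ∀ w ∈ P, ∀ w' ∈ P, w + w' ∈ P := by
    rintro w ⟨x, hx, rfl⟩ w' ⟨y, hy, rfl⟩
    exact ⟨x * y, V.mul_mem hx hy, rfl⟩
  have hβP : ∀ g : ↥Γ, β g ∈ P := by
    intro g
    refine ⟨affAct (g : HeisIsomGp (n-1)) 1, hVinv _ g.2 1 V.one_mem, ?_⟩
    show (g : HeisIsomGp (n-1)).left.ξ
        + (g : HeisIsomGp (n-1)).right (0 : EuclideanSpace ℂ (Fin (n-1)))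
      = (g : HeisIsomGp (n-1)).left.ξ
    rw [map_zero, add_zero]
  -- the bound coming from cocompactness
  have hcont : Continuous fun x : Heis (n-1) => ‖x.ξ‖ := by
    have h1 : Continuous fun x : Heis (n-1) =>
        (x.ξ, x.v) := continuous_induced_dom
    exact (continuous_fst.comp h1).norm
  obtain ⟨R, hR⟩ : ∃ R : ℝ, ∀ k ∈ K, ‖k.ξ‖ ≤ R := by
    obtain ⟨R, hR⟩ := (hKcomp.image hcont).bddAbove
    exact ⟨R, fun k hk => hR (Set.mem_image_of_mem _ hk)⟩
  have hdense : ∀ w ∈ P, ∃ g : ↥Γ, ‖w - β g‖ ≤ R := by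
    rintro w ⟨x, hx, rfl⟩
    have hx2 := hcover hx
    simp only [Set.mem_iUnion] at hx2
    obtain ⟨γ', hγ', k, hk, heq⟩ := hx2
    refine ⟨⟨γ', hγ'⟩, ?_⟩
    have hxi : x.ξ = γ'.left.ξ + γ'.right k.ξ := by rw [← heq]; rfl
    have hsub : x.ξ - β ⟨γ', hγ'⟩ = γ'.right k.ξ := by
      rw [hxi]
      show γ'.left.ξ + γ'.right k.ξ - γ'.left.ξ = γ'.right k.ξ
      abel
    rw [hsub, (γ'.right).norm_map]
    exact hR k hk
  -- abelian / 2-step hypothesis in the subtype group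
  have hstep : (∀ a b : ↥Γ, a * b = b * a) ∨ (∀ a b c : ↥Γ, ⁅⁅a, b⁆, c⁆ = 1) := by
    rcases hnilp with h | h
    · exact Or.inl fun a b => Subtype.ext (h a a.2 b b.2)
    · refine Or.inr fun a b c => Subtype.ext ?_
      have hc := h a a.2 b b.2 c c.2
      simpa [commutatorElement_def] using hc
  have main := aux_key A β hβ P hPadd hβP R hdense hstep
  intro γ hγ
  refine ⟨γ.left, fun x hx => ?_⟩
  have hfix : γ.right x.ξ = x.ξ := main ⟨γ, hγ⟩ x.ξ ⟨x, hx, rfl⟩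
  show γ.left * rotHom (n-1) γ.right x = γ.left * x
  congr 1
  cases x with
  | mk ξ v =>
    show Heis.mk (γ.right ξ) v = Heis.mk ξ v
    rw [show γ.right ξ = ξ from hfix]
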